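/- Let n ≥ 1, let s ≤ ℓ be positive integers, and let e_1,...,e_m ⊆ {1,...,n} be intervals with integer valuations w_j ∈ [s,ℓ]. For a subset S ⊆ {0,1,...,n} and an integer x ∈ [s,ℓ], define the partial sums σ_i = 0 for i ∈ S and σ_i = x for i ∉ S (i = 0,1,...,n), and the price vector p^{S,x} ∈ ℝ^n by p^{S,x}_i = σ_i − σ_{i−1}. Then the average over all 2^{n+1} subsets S ⊆ {0,1,...,n} of max_{s ≤ x ≤ ℓ} Profit(p^{S,x}) is at least Profit(q) / (4(1 − ln(s/ℓ))) for every price vector q ∈ ℝ^n. -/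

import Mathlib

/-- The profit, under the coupon model, of a price vector `p` on items of type
`ι`, given customers `j : κ` with bundles `e j` and valuations `w j`:
`Profit(p) = Σ_{j : p(e_j) ≤ w_j} max(p(e_j), 0)`. -/
noncomputable def couponProfit {ι κ : Type*} [Fintype κ] (e : κ → Finset ι)
    (w : κ → ℝ) (p : ι → ℝ) : ℝ :=
  ∑ j, if (∑ i ∈ e j, p i) ≤ w j then max (∑ i ∈ e j, p i) 0 else 0

open Finset

-- telescoping over Fin intervals
lemma tele {n : ℕ} (g : Fin (n+1) → ℝ) (a b : Fin n) (hab : a ≤ b) :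
    ∑ i ∈ Icc a b, (g i.succ - g i.castSucc) = g b.succ - g a.castSucc := by
  classical
  set F : ℕ → ℝ := fun k => if h : k < n + 1 then g ⟨k, h⟩ else 0 with hF
  have key : ∀ i : Fin n, g i.succ - g i.castSucc = F (i.val + 1) - F i.val := by
    intro i
    have h1 : i.val + 1 < n + 1 := by omega
    have h2 : i.val < n + 1 := by omega
    simp only [hF, dif_pos h1, dif_pos h2]
    congr 1
  calc ∑ i ∈ Icc a b, (g i.succ - g i.castSucc)
      = ∑ i ∈ Icc a b, (F (i.val + 1) - F i.val) := by
        exact Finset.sum_congr rfl fun i _ => key i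
    _ = ∑ k ∈ Icc (a:ℕ) (b:ℕ), (F (k + 1) - F k) := by
        rw [← Fin.map_valEmbedding_Icc, Finset.sum_map]
        rfl
    _ = g b.succ - g a.castSucc := by
        rw [← Finset.Ico_add_one_right_eq_Icc, Finset.sum_Ico_eq_sub _ (by omega : (a:ℕ) ≤ (b:ℕ)+1),
          Finset.sum_range_sub, Finset.sum_range_sub]
        have hb : (b:ℕ) + 1 < n + 1 := by omega
        have ha : (a:ℕ) < n + 1 := by omega
        simp only [hF, dif_pos hb, dif_pos ha]
        rw [show (⟨(b:ℕ)+1, hb⟩ : Fin (n+1)) = b.succ from rfl,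
          show (⟨(a:ℕ), ha⟩ : Fin (n+1)) = a.castSucc from rfl]
        ring

-- counting lemma
lemma countS {α : Type*} [DecidableEq α] [Fintype α] {u v : α} (huv : u ≠ v) :
    (Finset.univ.filter (fun S : Finset α => u ∈ S ∧ v ∉ S)).card
      = 2 ^ (Fintype.card α - 2) := by
  classical
  have : (Finset.univ.filter (fun S : Finset α => u ∈ S ∧ v ∉ S)).card
      = ((Finset.univ \ {u, v}).powerset).card := by
    apply Finset.card_nbij' (fun S => S.erase u) (fun T => insert u T)
    · intro S hS
      simp only [Finset.mem_coe, mem_filter, mem_univ, true_and] at hS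
      simp only [Finset.mem_coe, mem_powerset]
      intro x hx
      rw [Finset.mem_erase] at hx
      rw [Finset.mem_sdiff]
      refine ⟨Finset.mem_univ x, ?_⟩
      intro hmem
      rcases Finset.mem_insert.1 hmem with h | h
      · exact hx.1 h
      · rw [Finset.mem_singleton] at h; subst h; exact hS.2 hx.2
    · intro T hT
      simp only [Finset.mem_coe, mem_powerset] at hT
      simp only [Finset.mem_coe, mem_filter, mem_univ, true_and]
      constructor
      · exact Finset.mem_insert_self u T
      · intro hv
        rcases Finset.mem_insert.1 hv with h | h
        · exact huv h.symm
        · exact (Finset.mem_sdiff.1 (hT h)).2 (by simp)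
    · intro S hS
      simp only [Finset.mem_coe, mem_filter, mem_univ, true_and] at hS
      exact Finset.insert_erase hS.1
    · intro T hT
      simp only [Finset.mem_coe, mem_powerset] at hT
      refine Finset.erase_insert ?_
      intro hu
      have := hT hu
      simp [mem_sdiff] at this
  rw [this, Finset.card_powerset, Finset.card_sdiff_of_subset (by simp), Finset.card_univ]
  congr 1
  rw [Finset.card_insert_of_notMem (by simpa using huv), Finset.card_singleton]

-- harmonic bound
lemma harm {s ℓ : ℕ} (hs : 1 ≤ s) (hsl : s ≤ ℓ) :
    ∑ x ∈ Ioc s ℓ, (1 : ℝ) / x ≤ Real.log ℓ - Real.log s := by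
  induction ℓ, hsl using Nat.le_induction with
  | base => simp
  | succ ℓ hl ih =>
    rw [Finset.sum_Ioc_succ_top hl]
    have h1 : (1 : ℝ) / (ℓ + 1) ≤ Real.log (ℓ + 1) - Real.log ℓ := by
      have hℓ : (0:ℝ) < ℓ := by exact_mod_cast (by omega : 0 < ℓ)
      have hℓ1 : (0:ℝ) < (ℓ:ℝ) + 1 := by linarith
      have := Real.log_le_sub_one_of_pos (x := (ℓ:ℝ) / (ℓ + 1)) (by positivity)
      rw [Real.log_div (ne_of_gt hℓ) (ne_of_gt hℓ1)] at this
      have h2 : (ℓ:ℝ) / (ℓ + 1) - 1 = -(1 / (ℓ + 1)) := by field_simp; ring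
      linarith [this, h2 ▸ this]
    have : ((ℓ:ℝ) + 1) = ((ℓ + 1 : ℕ) : ℝ) := by push_cast; ring
    rw [← this] at *
    linarith

lemma sumS {n m : ℕ} (a b : Fin m → Fin n) (hab : ∀ j, a j ≤ b j)
    (w : Fin m → ℕ) (hw0 : ∀ j, 1 ≤ w j) (x : ℕ) (hx : 1 ≤ x) :
    ∑ S : Finset (Fin (n+1)),
        couponProfit (fun j => Finset.Icc (a j) (b j)) (fun j => (w j : ℝ))
          (fun i => (if i.succ ∈ S then (0:ℝ) else (x:ℝ)) -
            (if i.castSucc ∈ S then (0:ℝ) else (x:ℝ)))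
      = 2^(n-1) * ∑ j, (if (x:ℝ) ≤ (w j : ℝ) then (x:ℝ) else 0) := by
  classical
  unfold couponProfit
  rw [Finset.sum_comm, Finset.mul_sum]
  apply Finset.sum_congr rfl
  intro j _
  have huv : (a j).castSucc ≠ (b j).succ :=
    ne_of_lt (lt_of_le_of_lt (Fin.castSucc_le_castSucc_iff.2 (hab j))
      (Fin.castSucc_lt_succ))
  have hx0 : (0:ℝ) ≤ (x:ℝ) := by positivity
  have hwj : (0:ℝ) ≤ (w j : ℝ) := by positivity
  have hterm : ∀ S : Finset (Fin (n+1)),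
      (if (∑ i ∈ Finset.Icc (a j) (b j),
            ((if i.succ ∈ S then (0:ℝ) else (x:ℝ)) -
              (if i.castSucc ∈ S then (0:ℝ) else (x:ℝ)))) ≤ (w j : ℝ)
        then max (∑ i ∈ Finset.Icc (a j) (b j),
            ((if i.succ ∈ S then (0:ℝ) else (x:ℝ)) -
              (if i.castSucc ∈ S then (0:ℝ) else (x:ℝ)))) 0 else 0)
      = (if ((a j).castSucc ∈ S ∧ (b j).succ ∉ S)
          then (if (x:ℝ) ≤ (w j : ℝ) then (x:ℝ) else 0) else 0) := by
    intro S
    have ht := tele (fun t => if t ∈ S then (0:ℝ) else (x:ℝ)) (a j) (b j) (hab j)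
    simp only [ht]
    by_cases hu : (a j).castSucc ∈ S <;> by_cases hv : (b j).succ ∈ S
    · simp [hu, hv, hwj]
    · simp only [hu, hv, if_true, if_false, sub_zero, and_true, if_true,
        not_false_iff]
      split
      · rw [max_eq_left hx0]
      · rfl
    · simp only [hu, hv, if_true, if_false, zero_sub, and_false,
        not_true, false_and]
      rw [if_pos (by linarith : -(x:ℝ) ≤ (w j : ℝ)),
        max_eq_right (by linarith : -(x:ℝ) ≤ 0)]
    · simp [hu, hv, hwj]
  rw [Finset.sum_congr rfl (fun S _ => hterm S), ← Finset.sum_filter,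
    Finset.sum_const, countS huv, Fintype.card_fin,
    show (n+1) - 2 = n - 1 from by omega, nsmul_eq_mul]
  push_cast
  ring

lemma wsum_le {m s ℓ : ℕ} (hs : 1 ≤ s) (hsl : s ≤ ℓ) (w : Fin m → ℕ)
    (hw : ∀ j, s ≤ w j ∧ w j ≤ ℓ) {x0 : ℕ}
    (hmax : ∀ x ∈ Finset.Icc s ℓ,
      (∑ j, if (x:ℝ) ≤ (w j:ℝ) then (x:ℝ) else 0) ≤
        (∑ j, if (x0:ℝ) ≤ (w j:ℝ) then (x0:ℝ) else 0)) :
    ∑ j, (w j : ℝ) ≤ (1 + (Real.log ℓ - Real.log s)) *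
      (∑ j, if (x0:ℝ) ≤ (w j:ℝ) then (x0:ℝ) else 0) := by
  classical
  set T : ℕ → ℝ := fun x => ∑ j, if (x:ℝ) ≤ (w j:ℝ) then (x:ℝ) else 0 with hTdef
  set c : ℕ → ℝ := fun x => ∑ j, if x ≤ w j then (1:ℝ) else 0 with hcdef
  have hTc : ∀ x : ℕ, T x = (x:ℝ) * c x := by
    intro x
    rw [hTdef, hcdef]
    simp only [Finset.mul_sum, Nat.cast_le]
    apply Finset.sum_congr rfl
    intro j _
    split <;> simp
  have hTnn : (0:ℝ) ≤ T x0 := by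
    apply Finset.sum_nonneg
    intro j _
    split <;> positivity
  have hcm : ∀ x : ℕ, x ≤ s → c x = (m:ℝ) := by
    intro x hx
    show (∑ j, if x ≤ w j then (1:ℝ) else 0) = (m:ℝ)
    rw [Finset.sum_congr rfl (fun j _ => if_pos (le_trans hx (hw j).1))]
    simp
  have hper : ∀ j, (w j : ℝ) = ∑ x ∈ Finset.Ioc 0 ℓ, (if x ≤ w j then (1:ℝ) else 0) := by
    intro j
    rw [← Finset.sum_filter]
    have hf : (Finset.Ioc 0 ℓ).filter (fun x => x ≤ w j) = Finset.Ioc 0 (w j) := by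
      ext x
      simp only [Finset.mem_filter, Finset.mem_Ioc]
      have := (hw j).2
      have := (hw j).1
      omega
    rw [hf, Finset.sum_const, Nat.card_Ioc, nsmul_eq_mul]
    simp
  have hsplit : ∑ j, (w j:ℝ) = (∑ x ∈ Finset.Ioc 0 s, c x) + ∑ x ∈ Finset.Ioc s ℓ, c x := by
    calc ∑ j, (w j:ℝ) = ∑ x ∈ Finset.Ioc 0 ℓ, c x := by
          rw [Finset.sum_congr rfl (fun j _ => hper j), Finset.sum_comm]
      _ = _ := (Finset.sum_Ioc_consecutive _ (Nat.zero_le s) hsl).symm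
  have h1 : (∑ x ∈ Finset.Ioc 0 s, c x) ≤ T x0 := by
    have hval : (∑ x ∈ Finset.Ioc 0 s, c x) = (s:ℝ) * m := by
      rw [Finset.sum_congr rfl (fun x hx => hcm x (Finset.mem_Ioc.1 hx).2),
        Finset.sum_const, Nat.card_Ioc, nsmul_eq_mul]
      simp
    have hTs : T s = (s:ℝ) * m := by rw [hTc s, hcm s le_rfl]
    rw [hval, ← hTs]
    exact hmax s (Finset.mem_Icc.2 ⟨le_rfl, hsl⟩)
  have h2 : (∑ x ∈ Finset.Ioc s ℓ, c x) ≤ T x0 * (Real.log ℓ - Real.log s) := by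
    calc ∑ x ∈ Finset.Ioc s ℓ, c x ≤ ∑ x ∈ Finset.Ioc s ℓ, T x0 * ((1:ℝ)/x) := by
          apply Finset.sum_le_sum
          intro x hx
          rw [Finset.mem_Ioc] at hx
          have hxpos : (0:ℝ) < x := by exact_mod_cast (by omega : 0 < x)
          have hTle : T x ≤ T x0 := hmax x (Finset.mem_Icc.2 ⟨le_of_lt hx.1, hx.2⟩)
          have hx' : T x = (x:ℝ) * c x := hTc x
          rw [mul_one_div, le_div_iff₀ hxpos, mul_comm]
          linarith
      _ = T x0 * ∑ x ∈ Finset.Ioc s ℓ, (1:ℝ)/x := by rw [Finset.mul_sum]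
      _ ≤ T x0 * (Real.log ℓ - Real.log s) :=
          mul_le_mul_of_nonneg_left (harm hs hsl) hTnn
  rw [hsplit]
  have hgoal : (1 + (Real.log ℓ - Real.log s)) * T x0
      = T x0 + T x0 * (Real.log ℓ - Real.log s) := by ring
  show _ ≤ (1 + (Real.log ℓ - Real.log s)) * T x0
  rw [hgoal]
  linarith

/-- For a reduced instance of the line highway problem with
`[s,ℓ]`-valuation on `n ≥ 1` items, and for a subset `S ⊆ {0,…,n}` (realized
as `S : Finset (Fin (n+1))`) and an integer `x ∈ [s,ℓ]`, define partial sums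
`σ_i = 0` for `i ∈ S`, `σ_i = x` for `i ∉ S`, and the price vector
`p^{S,x}_i = σ_i - σ_{i-1}`.  The average over all `2^{n+1}` subsets `S` of
`max_{s ≤ x ≤ ℓ} Profit(p^{S,x})` is at least
`Profit(q) / (4(1 - ln(s/ℓ)))` for every price vector `q ∈ ℝ^n`. -/
theorem stmt_8 (n m s ℓ : ℕ) (hn : 1 ≤ n) (hs : 1 ≤ s) (hsl : s ≤ ℓ)
    (a b : Fin m → Fin n) (hab : ∀ j, a j ≤ b j)
    (w : Fin m → ℕ) (hw : ∀ j, s ≤ w j ∧ w j ≤ ℓ)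
    (q : Fin n → ℝ) :
    (1 / (2 : ℝ) ^ (n + 1)) *
        ∑ S : Finset (Fin (n + 1)),
          (Finset.Icc s ℓ).sup' (Finset.nonempty_Icc.2 hsl) (fun x =>
            couponProfit (fun j => Finset.Icc (a j) (b j)) (fun j => (w j : ℝ))
              (fun i => (if i.succ ∈ S then (0 : ℝ) else (x : ℝ)) -
                (if i.castSucc ∈ S then (0 : ℝ) else (x : ℝ)))) ≥
      couponProfit (fun j => Finset.Icc (a j) (b j)) (fun j => (w j : ℝ)) q /
        (4 * (1 - Real.log ((s : ℝ) / (ℓ : ℝ)))) := by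
  classical
  obtain ⟨x0, hx0mem, hx0max⟩ := Finset.exists_max_image (Finset.Icc s ℓ)
    (fun x : ℕ => ∑ j, if (x:ℝ) ≤ (w j:ℝ) then (x:ℝ) else 0)
    (Finset.nonempty_Icc.2 hsl)
  have hx0s : s ≤ x0 := (Finset.mem_Icc.1 hx0mem).1
  have hTnn : (0:ℝ) ≤ ∑ j, if (x0:ℝ) ≤ (w j:ℝ) then (x0:ℝ) else 0 := by
    apply Finset.sum_nonneg
    intro j _
    split <;> positivity
  -- Step A
  have hA : (∑ j, if (x0:ℝ) ≤ (w j:ℝ) then (x0:ℝ) else 0) / 4 ≤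
      (1 / (2 : ℝ) ^ (n + 1)) *
        ∑ S : Finset (Fin (n + 1)),
          (Finset.Icc s ℓ).sup' (Finset.nonempty_Icc.2 hsl) (fun x =>
            couponProfit (fun j => Finset.Icc (a j) (b j)) (fun j => (w j : ℝ))
              (fun i => (if i.succ ∈ S then (0 : ℝ) else (x : ℝ)) -
                (if i.castSucc ∈ S then (0 : ℝ) else (x : ℝ)))) := by
    have hsum : (∑ S : Finset (Fin (n + 1)),
        couponProfit (fun j => Finset.Icc (a j) (b j)) (fun j => (w j : ℝ))
          (fun i => (if i.succ ∈ S then (0 : ℝ) else (x0 : ℝ)) -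
            (if i.castSucc ∈ S then (0 : ℝ) else (x0 : ℝ)))) ≤
        ∑ S : Finset (Fin (n + 1)),
          (Finset.Icc s ℓ).sup' (Finset.nonempty_Icc.2 hsl) (fun x =>
            couponProfit (fun j => Finset.Icc (a j) (b j)) (fun j => (w j : ℝ))
              (fun i => (if i.succ ∈ S then (0 : ℝ) else (x : ℝ)) -
                (if i.castSucc ∈ S then (0 : ℝ) else (x : ℝ)))) := by
      apply Finset.sum_le_sum
      intro S _
      exact Finset.le_sup' (fun x : ℕ =>
        couponProfit (fun j => Finset.Icc (a j) (b j)) (fun j => (w j : ℝ))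
          (fun i => (if i.succ ∈ S then (0 : ℝ) else (x : ℝ)) -
            (if i.castSucc ∈ S then (0 : ℝ) else (x : ℝ)))) hx0mem
    rw [sumS a b hab w (fun j => le_trans hs (hw j).1) x0 (le_trans hs hx0s)] at hsum
    have hpow : (2:ℝ)^(n+1) = 2^(n-1) * 4 := by
      rw [show n + 1 = (n-1) + 2 from by omega, pow_add]
      norm_num
    have hpos : (0:ℝ) < 1 / 2^(n+1) := by positivity
    calc (∑ j, if (x0:ℝ) ≤ (w j:ℝ) then (x0:ℝ) else 0) / 4
        = (1/(2:ℝ)^(n+1)) * (2^(n-1) * ∑ j, if (x0:ℝ) ≤ (w j:ℝ) then (x0:ℝ) else 0) := by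
          rw [hpow]
          have h2 : (0:ℝ) < (2:ℝ)^(n-1) := by positivity
          field_simp
      _ ≤ _ := mul_le_mul_of_nonneg_left hsum (le_of_lt hpos)
  -- Step B
  have hB : couponProfit (fun j => Finset.Icc (a j) (b j)) (fun j => (w j : ℝ)) q
      ≤ ∑ j, (w j : ℝ) := by
    unfold couponProfit
    apply Finset.sum_le_sum
    intro j _
    split
    · exact max_le (by assumption) (by positivity)
    · positivity
  -- Step C
  have hC := wsum_le hs hsl w hw hx0max
  -- Step D
  have hsR : (0:ℝ) < (s:ℝ) := by exact_mod_cast hs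
  have hlR : (0:ℝ) < (ℓ:ℝ) := by exact_mod_cast le_trans hs hsl
  have hD : 1 - Real.log ((s:ℝ)/(ℓ:ℝ)) = 1 + (Real.log ℓ - Real.log s) := by
    rw [Real.log_div (ne_of_gt hsR) (ne_of_gt hlR)]
    ring
  have hDpos : (0:ℝ) < 1 + (Real.log ℓ - Real.log s) := by
    have := Real.log_le_log hsR (Nat.cast_le.2 hsl)
    linarith
  rw [ge_iff_le]
  calc couponProfit (fun j => Finset.Icc (a j) (b j)) (fun j => (w j : ℝ)) q /
        (4 * (1 - Real.log ((s:ℝ)/(ℓ:ℝ))))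
      = couponProfit (fun j => Finset.Icc (a j) (b j)) (fun j => (w j : ℝ)) q /
        (4 * (1 + (Real.log ℓ - Real.log s))) := by rw [hD]
    _ ≤ (∑ j, if (x0:ℝ) ≤ (w j:ℝ) then (x0:ℝ) else 0) / 4 := by
        rw [div_le_div_iff₀ (by positivity) (by norm_num : (0:ℝ) < 4)]
        have hBC := le_trans hB hC
        nlinarith [hBC, hDpos, hTnn]
    _ ≤ _ := hA
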